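/- arXiv:2412.00336 — 3 statements merged into one kernel-verified Lean document; each statement's English description precedes it below -/
import Mathlib

section
/- For all n ≥ 1, the number of nonnesting permutations of the multiset {1,1,2,2,…,n,n} that avoid the pattern 112 equals the nth Catalan number C_n = binom(2n,n)/(n+1). -/
/-- `w` is a permutation of the multiset `{1,1,2,2,…,n,n}`:
a word in which every value in `{1,…,n}` occurs exactly twice
and no other value occurs. -/
def IsMultisetPerm (n : ℕ) (w : List ℕ) : Prop :=
  ∀ i : ℕ, w.count i = if 1 ≤ i ∧ i ≤ n then 2 else 0

/-- `t` is order-isomorphic to the word `σ`: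
same length, and entries compare (both `<` and `=`) in the same way. -/
def OrderIsoWord (t σ : List ℕ) : Prop :=
  t.length = σ.length ∧
  ∀ r s : ℕ, r < σ.length → s < σ.length →
    ((t.getD r 0 < t.getD s 0 ↔ σ.getD r 0 < σ.getD s 0) ∧
     (t.getD r 0 = t.getD s 0 ↔ σ.getD r 0 = σ.getD s 0))

/-- `w` contains the pattern `σ`: some subsequence of `w`
is order-isomorphic to `σ`. -/
def Contains (w σ : List ℕ) : Prop :=
  ∃ t : List ℕ, t.Sublist w ∧ OrderIsoWord t σ

/-- `w` avoids the pattern `σ`. -/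
def Avoids (w σ : List ℕ) : Prop := ¬ Contains w σ

/-- `w` is a nonnesting permutation of `{1,1,2,2,…,n,n}`:
it avoids the patterns `1221` and `2112`. -/
def IsNonnesting (n : ℕ) (w : List ℕ) : Prop :=
  IsMultisetPerm n w ∧ Avoids w [1,2,2,1] ∧ Avoids w [2,1,1,2]

open List DyckStep

/-- Generate the word: at state `(f,s)`, a `U` emits `f` (next unopened value),
a `D` emits `s` (next value to be closed). -/
def tw : ℕ → ℕ → List DyckStep → List ℕ
  | _, _, [] => []
  | f, s, (U :: l) => f :: tw (f-1) s l
  | f, s, (D :: l) => s :: tw f (s-1) l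

def goodL (f s : ℕ) (l : List DyckStep) : Prop :=
  l.count U = f ∧ l.count D = s ∧
  ∀ i, (l.take i).count D + f ≤ s + (l.take i).count U

def StW (f s : ℕ) (w : List ℕ) : Prop :=
  (∀ i, w.count i = if 1 ≤ i ∧ i ≤ f then 2 else if f < i ∧ i ≤ s then 1 else 0) ∧
  (∀ a b : ℕ, a < b → ¬ [a,a,b].Sublist w) ∧
  (∀ a b : ℕ, a < b → ¬ [a,b,b,a].Sublist w) ∧
  (∀ a b : ℕ, a < b → ¬ [b,a,a,b].Sublist w) ∧
  (∀ x y : ℕ, f < x → x < y → ¬ [x,y].Sublist w)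

lemma count_U_add_count_D (l : List DyckStep) : l.count U + l.count D = l.length := by
  induction l with
  | nil => simp
  | cons a l ih => cases a <;> simp [List.count_cons] <;> omega

lemma goodL_cons_U {f s : ℕ} {l : List DyckStep} (h : goodL f s (U :: l)) :
    1 ≤ f ∧ goodL (f-1) s l := by
  obtain ⟨hU, hD, hpre⟩ := h
  rw [List.count_cons_self] at hU
  rw [List.count_cons_of_ne (by simp)] at hD
  refine ⟨by omega, by omega, hD, fun i => ?_⟩
  have := hpre (i+1)
  rw [List.take_succ_cons, List.count_cons_self, List.count_cons_of_ne (by simp)] at this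
  omega

lemma goodL_cons_D {f s : ℕ} {l : List DyckStep} (h : goodL f s (D :: l)) :
    f + 1 ≤ s ∧ goodL f (s-1) l := by
  obtain ⟨hU, hD, hpre⟩ := h
  rw [List.count_cons_self] at hD
  rw [List.count_cons_of_ne (by simp)] at hU
  have h1 := hpre 1
  simp [List.count_cons] at h1
  refine ⟨by omega, hU, by omega, fun i => ?_⟩
  have := hpre (i+1)
  rw [List.take_succ_cons, List.count_cons_self, List.count_cons_of_ne (by simp)] at this
  omega

lemma pair_sub {x y : ℕ} : ∀ {v : List ℕ}, x ≠ y → x ∈ v → y ∈ v →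
    [x,y].Sublist v ∨ [y,x].Sublist v := by
  intro v
  induction v with
  | nil => simp
  | cons c t ih =>
    intro hxy hx hy
    rcases eq_or_ne c x with rfl | hcx
    · have hyt : y ∈ t := by
        rcases List.mem_cons.mp hy with h | h
        · exact absurd h.symm hxy
        · exact h
      exact Or.inl (List.cons_sublist_cons.mpr (List.singleton_sublist.mpr hyt))
    · rcases eq_or_ne c y with rfl | hcy
      · have hxt : x ∈ t := by
          rcases List.mem_cons.mp hx with h | h
          · exact absurd h hcx.symm
          · exact h
        exact Or.inr (List.cons_sublist_cons.mpr (List.singleton_sublist.mpr hxt))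
      · have hxt : x ∈ t := by
          rcases List.mem_cons.mp hx with h | h
          · exact absurd h.symm hcx
          · exact h
        have hyt : y ∈ t := by
          rcases List.mem_cons.mp hy with h | h
          · exact absurd h.symm hcy
          · exact h
        rcases ih hxy hxt hyt with h | h
        · exact Or.inl (h.cons c)
        · exact Or.inr (h.cons c)

lemma triple_sub {x y : ℕ} : ∀ {v : List ℕ}, x ≠ y → x ∈ v → 2 ≤ v.count y →
    [x,y].Sublist v ∨ [y,y,x].Sublist v := by
  intro v
  induction v with
  | nil => simp
  | cons c t ih =>
    intro hxy hx hcnt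
    rcases eq_or_ne c x with rfl | hcx
    · have h2 : 2 ≤ t.count y := by
        rwa [List.count_cons_of_ne hxy] at hcnt
      have hyt : y ∈ t := List.count_pos_iff.mp (by omega)
      exact Or.inl (List.cons_sublist_cons.mpr (List.singleton_sublist.mpr hyt))
    · rcases eq_or_ne c y with rfl | hcy
      · have hxt : x ∈ t := by
          rcases List.mem_cons.mp hx with h | h
          · exact absurd h hcx.symm
          · exact h
        have hyt : c ∈ t := by
          rw [List.count_cons_self] at hcnt
          exact List.count_pos_iff.mp (by omega)
        rcases pair_sub hxy hxt hyt with h | h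
        · exact Or.inl (h.cons c)
        · exact Or.inr (List.cons_sublist_cons.mpr h)
      · have hxt : x ∈ t := by
          rcases List.mem_cons.mp hx with h | h
          · exact absurd h.symm hcx
          · exact h
        have h2 : 2 ≤ t.count y := by
          rwa [List.count_cons_of_ne hcy] at hcnt
        rcases ih hxy hxt h2 with h | h
        · exact Or.inl (h.cons c)
        · exact Or.inr (h.cons c)

lemma L1 : ∀ (l : List DyckStep) (f s : ℕ), f ≤ s → goodL f s l → StW f s (tw f s l) := by
  intro l
  induction l with
  | nil =>
    intro f s hfs hg
    obtain ⟨hU, hD, -⟩ := hg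
    simp only [List.count_nil] at hU hD
    subst hU hD
    refine ⟨fun i => by simp only [tw, List.count_nil]; split_ifs <;> omega, ?_, ?_, ?_, ?_⟩
    · exact fun a b _ h => by simp [tw] at h
    · exact fun a b _ h => by simp [tw] at h
    · exact fun a b _ h => by simp [tw] at h
    · exact fun x y _ _ h => by simp [tw] at h
  | cons a l ih =>
    intro f s hfs hg
    cases a with
    | U =>
      obtain ⟨hf1, hg'⟩ := goodL_cons_U hg
      have hfs' : f - 1 ≤ s := by omega
      obtain ⟨hc, h112, h1221, h2112, hpend⟩ := ih (f-1) s hfs' hg'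
      rw [show tw f s (U::l) = f :: tw (f-1) s l from rfl]
      set v := tw (f-1) s l with hv
      have hcf : v.count f = 1 := by rw [hc f]; split_ifs <;> omega
      refine ⟨?_, ?_, ?_, ?_, ?_⟩
      · intro i
        simp only [List.count_cons, beq_iff_eq, hc i]
        split_ifs <;> omega
      · intro a b hab hsub
        rcases List.cons_sublist_cons'.mp hsub with h | ⟨rfl, h⟩
        · exact h112 a b hab h
        · exact hpend a b (by omega) hab h
      · intro a b hab hsub
        rcases List.cons_sublist_cons'.mp hsub with h | ⟨rfl, h⟩
        · exact h1221 a b hab h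
        · have hbb : [b,b].Sublist v :=
            List.Sublist.trans (List.cons_sublist_cons.mpr (List.cons_sublist_cons.mpr
              (List.nil_sublist _))) h
          have h2 : 2 ≤ v.count b := List.replicate_sublist_iff.mp
            (by rw [show List.replicate 2 b = [b,b] from rfl]; exact hbb)
          have := hc b
          split_ifs at this <;> omega
      · intro a b hab hsub
        rcases List.cons_sublist_cons'.mp hsub with h | ⟨rfl, h⟩
        · exact h2112 a b hab h
        · exact h112 a b hab h
      · intro x y hx hy hsub
        rcases List.cons_sublist_cons'.mp hsub with h | ⟨rfl, h⟩
        · exact hpend x y (by omega) hy h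
        · omega
    | D =>
      obtain ⟨hfs1, hg'⟩ := goodL_cons_D hg
      have hfs' : f ≤ s - 1 := by omega
      obtain ⟨hc, h112, h1221, h2112, hpend⟩ := ih f (s-1) hfs' hg'
      rw [show tw f s (D::l) = s :: tw f (s-1) l from rfl]
      set v := tw f (s-1) l with hv
      have hcs : v.count s = 0 := by rw [hc s]; split_ifs <;> omega
      have hbig : ∀ b, s < b → v.count b = 0 := fun b hb => by
        rw [hc b]; split_ifs <;> omega
      refine ⟨?_, ?_, ?_, ?_, ?_⟩
      · intro i
        simp only [List.count_cons, beq_iff_eq, hc i]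
        split_ifs <;> omega
      · intro a b hab hsub
        rcases List.cons_sublist_cons'.mp hsub with h | ⟨rfl, h⟩
        · exact h112 a b hab h
        · have : b ∈ v := h.subset (by simp)
          have := List.count_pos_iff.mpr this
          have := hbig b hab
          omega
      · intro a b hab hsub
        rcases List.cons_sublist_cons'.mp hsub with h | ⟨rfl, h⟩
        · exact h1221 a b hab h
        · have : b ∈ v := h.subset (by simp)
          have := List.count_pos_iff.mpr this
          have := hbig b hab
          omega
      · intro a b hab hsub
        rcases List.cons_sublist_cons'.mp hsub with h | ⟨rfl, h⟩
        · exact h2112 a b hab h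
        · have : b ∈ v := h.subset (by simp)
          have := List.count_pos_iff.mpr this
          omega
      · intro x y hx hy hsub
        rcases List.cons_sublist_cons'.mp hsub with h | ⟨rfl, h⟩
        · exact hpend x y hx hy h
        · have : y ∈ v := h.subset (by simp)
          have := List.count_pos_iff.mpr this
          have := hbig y hy
          omega

lemma L2 : ∀ (w : List ℕ) (f s : ℕ), f ≤ s → StW f s w →
    ∃ l, goodL f s l ∧ w = tw f s l := by
  intro w
  induction w with
  | nil =>
    intro f s hfs hst
    obtain ⟨hc, -⟩ := hst
    have h1 := hc f
    have h2 := hc s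
    simp only [List.count_nil] at h1 h2
    have hf : f = 0 := by split_ifs at h1 <;> omega
    have hs : s = 0 := by split_ifs at h2 <;> omega
    subst hf hs
    exact ⟨[], ⟨rfl, rfl, by simp⟩, rfl⟩
  | cons h v ih =>
    intro f s hfs hst
    obtain ⟨hc, h112, h1221, h2112, hpend⟩ := hst
    have hch := hc h
    rw [List.count_cons_self] at hch
    have hcase : (1 ≤ h ∧ h ≤ f) ∨ (f < h ∧ h ≤ s) := by
      split_ifs at hch with c1 c2
      · exact Or.inl c1
      · exact Or.inr c2
    rcases hcase with ⟨hh1, hhf⟩ | ⟨hhf, hhs⟩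
    · -- h is a first occurrence; must be h = f
      have hhf' : h = f := by
        by_contra hne
        have hlt : h < f := lt_of_le_of_ne hhf hne
        have hcnth : v.count h = 1 := by split_ifs at hch <;> omega
        have hhv : h ∈ v := List.count_pos_iff.mp (by omega)
        have hcf : v.count f = 2 := by
          have hf2 := hc f
          rw [List.count_cons_of_ne (by omega)] at hf2
          rw [hf2]; split_ifs <;> omega
        rcases triple_sub hne hhv (by omega) with hsub | hsub
        · exact h112 h f hlt (List.cons_sublist_cons.mpr hsub)
        · exact h1221 h f hlt (List.cons_sublist_cons.mpr hsub)
      subst hhf'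
      have hst' : StW (h-1) s v := by
        refine ⟨?_, ?_, ?_, ?_, ?_⟩
        · intro i
          have hi := hc i
          simp only [List.count_cons, beq_iff_eq] at hi
          split_ifs at hi ⊢ <;> omega
        · exact fun a b hab hs => h112 a b hab (hs.cons h)
        · exact fun a b hab hs => h1221 a b hab (hs.cons h)
        · exact fun a b hab hs => h2112 a b hab (hs.cons h)
        · intro x y hx hy hsub
          rcases eq_or_lt_of_le (show h ≤ x by omega) with rfl | hlt'
          · exact h112 h y hy (List.cons_sublist_cons.mpr hsub)
          · exact hpend x y hlt' hy (hsub.cons h)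
      obtain ⟨l, ⟨hgU, hgD, hgpre⟩, hveq⟩ := ih (h-1) s (by omega) hst'
      refine ⟨U :: l, ⟨?_, ?_, ?_⟩, ?_⟩
      · rw [List.count_cons_self]; omega
      · rw [List.count_cons_of_ne (by simp)]; exact hgD
      · intro i
        cases i with
        | zero => simpa using hfs
        | succ i =>
          rw [List.take_succ_cons, List.count_cons_self,
            List.count_cons_of_ne (by simp)]
          have := hgpre i
          omega
      · rw [show tw h s (U :: l) = h :: tw (h-1) s l from rfl, ← hveq]
    · -- h is a second occurrence; must be h = s
      have hhs' : h = s := by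
        by_contra hne
        have hlt : h < s := lt_of_le_of_ne hhs hne
        have hcs : v.count s = 1 := by
          have hs2 := hc s
          rw [List.count_cons_of_ne (by omega)] at hs2
          rw [hs2]; split_ifs <;> omega
        have hsv : s ∈ v := List.count_pos_iff.mp (by omega)
        exact hpend h s hhf hlt
          (List.cons_sublist_cons.mpr (List.singleton_sublist.mpr hsv))
      subst hhs'
      have hst' : StW f (h-1) v := by
        refine ⟨?_, ?_, ?_, ?_, ?_⟩
        · intro i
          have hi := hc i
          simp only [List.count_cons, beq_iff_eq] at hi
          split_ifs at hi ⊢ <;> omega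
        · exact fun a b hab hs => h112 a b hab (hs.cons h)
        · exact fun a b hab hs => h1221 a b hab (hs.cons h)
        · exact fun a b hab hs => h2112 a b hab (hs.cons h)
        · exact fun x y hx hy hsub => hpend x y hx hy (hsub.cons h)
      obtain ⟨l, ⟨hgU, hgD, hgpre⟩, hveq⟩ := ih f (h-1) (by omega) hst'
      refine ⟨D :: l, ⟨?_, ?_, ?_⟩, ?_⟩
      · rw [List.count_cons_of_ne (by simp)]; exact hgU
      · rw [List.count_cons_self]; omega
      · intro i
        cases i with
        | zero => simpa using hfs
        | succ i =>
          rw [List.take_succ_cons, List.count_cons_self,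
            List.count_cons_of_ne (by simp)]
          have := hgpre i
          omega
      · rw [show tw f h (D :: l) = h :: tw f (h-1) l from rfl, ← hveq]

lemma tw_inj : ∀ (l l' : List DyckStep) (f s : ℕ), goodL f s l → goodL f s l' →
    tw f s l = tw f s l' → l = l' := by
  intro l
  induction l with
  | nil =>
    intro l' f s hg hg' _
    obtain ⟨hU, hD, -⟩ := hg
    obtain ⟨hU', hD', -⟩ := hg'
    simp only [List.count_nil] at hU hD
    have := count_U_add_count_D l'
    have : l'.length = 0 := by omega
    exact (List.length_eq_zero_iff.mp this).symm
  | cons a l ih =>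
    intro l' f s hg hg' heq
    cases l' with
    | nil =>
      obtain ⟨hU', hD', -⟩ := hg'
      simp only [List.count_nil] at hU' hD'
      obtain ⟨hU, hD, -⟩ := hg
      have := count_U_add_count_D (a :: l)
      simp only [List.length_cons] at this
      omega
    | cons a' l'' =>
      cases a with
      | U =>
        cases a' with
        | U =>
          obtain ⟨-, hgl⟩ := goodL_cons_U hg
          obtain ⟨-, hgl'⟩ := goodL_cons_U hg'
          have htl : tw (f-1) s l = tw (f-1) s l'' := by
            have : f :: tw (f-1) s l = f :: tw (f-1) s l'' := heq
            exact (List.cons.injEq _ _ _ _ ▸ this).2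
          rw [ih l'' (f-1) s hgl hgl' htl]
        | D =>
          obtain ⟨hf1, -⟩ := goodL_cons_U hg
          obtain ⟨hfs, -⟩ := goodL_cons_D hg'
          have : f :: tw (f-1) s l = s :: tw f (s-1) l'' := heq
          have hfs' : f = s := (List.cons.injEq _ _ _ _ ▸ this).1
          omega
      | D =>
        cases a' with
        | U =>
          obtain ⟨hfs, -⟩ := goodL_cons_D hg
          obtain ⟨hf1, -⟩ := goodL_cons_U hg'
          have : s :: tw f (s-1) l = f :: tw (f-1) s l'' := heq
          have hfs' : s = f := (List.cons.injEq _ _ _ _ ▸ this).1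
          omega
        | D =>
          obtain ⟨-, hgl⟩ := goodL_cons_D hg
          obtain ⟨-, hgl'⟩ := goodL_cons_D hg'
          have htl : tw f (s-1) l = tw f (s-1) l'' := by
            have : s :: tw f (s-1) l = s :: tw f (s-1) l'' := heq
            exact (List.cons.injEq _ _ _ _ ▸ this).2
          rw [ih l'' f (s-1) hgl hgl' htl]

lemma contains_1221_iff {w : List ℕ} :
    Contains w [1,2,2,1] ↔ ∃ a b : ℕ, a < b ∧ [a,b,b,a].Sublist w := by
  constructor
  · rintro ⟨t, hsub, hlen, hiso⟩
    rcases t with _|⟨x,t⟩; · simp at hlen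
    rcases t with _|⟨y,t⟩; · simp at hlen
    rcases t with _|⟨z,t⟩; · simp at hlen
    rcases t with _|⟨u,t⟩; · simp at hlen
    rcases t with _|⟨w5,t⟩; swap; · exfalso; simp at hlen
    have hxy : x < y := (hiso 0 1 (by norm_num) (by norm_num)).1.mpr (by norm_num)
    have hyz : y = z := (hiso 1 2 (by norm_num) (by norm_num)).2.mpr (by norm_num)
    have hxu : x = u := (hiso 0 3 (by norm_num) (by norm_num)).2.mpr (by norm_num)
    subst hyz hxu
    exact ⟨x, y, hxy, hsub⟩
  · rintro ⟨a, b, hab, hsub⟩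
    refine ⟨[a,b,b,a], hsub, rfl, ?_⟩
    intro r s hr hs
    simp only [List.length_cons, List.length_nil] at hr hs
    interval_cases r <;> interval_cases s <;>
      simp only [show ([a,b,b,a].getD 0 0 : ℕ) = a from rfl,
        show ([a,b,b,a].getD 1 0 : ℕ) = b from rfl,
        show ([a,b,b,a].getD 2 0 : ℕ) = b from rfl,
        show ([a,b,b,a].getD 3 0 : ℕ) = a from rfl,
        show (([1,2,2,1] : List ℕ).getD 0 0) = 1 from rfl,
        show (([1,2,2,1] : List ℕ).getD 1 0) = 2 from rfl,
        show (([1,2,2,1] : List ℕ).getD 2 0) = 2 from rfl,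
        show (([1,2,2,1] : List ℕ).getD 3 0) = 1 from rfl] <;>
      refine ⟨?_, ?_⟩ <;> first | trivial | omega

lemma contains_2112_iff {w : List ℕ} :
    Contains w [2,1,1,2] ↔ ∃ a b : ℕ, a < b ∧ [b,a,a,b].Sublist w := by
  constructor
  · rintro ⟨t, hsub, hlen, hiso⟩
    rcases t with _|⟨x,t⟩; · simp at hlen
    rcases t with _|⟨y,t⟩; · simp at hlen
    rcases t with _|⟨z,t⟩; · simp at hlen
    rcases t with _|⟨u,t⟩; · simp at hlen
    rcases t with _|⟨w5,t⟩; swap; · exfalso; simp at hlen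
    have hyx : y < x := (hiso 1 0 (by norm_num) (by norm_num)).1.mpr (by norm_num)
    have hyz : y = z := (hiso 1 2 (by norm_num) (by norm_num)).2.mpr (by norm_num)
    have hxu : x = u := (hiso 0 3 (by norm_num) (by norm_num)).2.mpr (by norm_num)
    subst hyz hxu
    exact ⟨y, x, hyx, hsub⟩
  · rintro ⟨a, b, hab, hsub⟩
    refine ⟨[b,a,a,b], hsub, rfl, ?_⟩
    intro r s hr hs
    simp only [List.length_cons, List.length_nil] at hr hs
    interval_cases r <;> interval_cases s <;>
      simp only [show ([b,a,a,b].getD 0 0 : ℕ) = b from rfl,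
        show ([b,a,a,b].getD 1 0 : ℕ) = a from rfl,
        show ([b,a,a,b].getD 2 0 : ℕ) = a from rfl,
        show ([b,a,a,b].getD 3 0 : ℕ) = b from rfl,
        show (([2,1,1,2] : List ℕ).getD 0 0) = 2 from rfl,
        show (([2,1,1,2] : List ℕ).getD 1 0) = 1 from rfl,
        show (([2,1,1,2] : List ℕ).getD 2 0) = 1 from rfl,
        show (([2,1,1,2] : List ℕ).getD 3 0) = 2 from rfl] <;>
      refine ⟨?_, ?_⟩ <;> first | trivial | omega

lemma contains_112_iff {w : List ℕ} :
    Contains w [1,1,2] ↔ ∃ a b : ℕ, a < b ∧ [a,a,b].Sublist w := by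
  constructor
  · rintro ⟨t, hsub, hlen, hiso⟩
    rcases t with _|⟨x,t⟩; · simp at hlen
    rcases t with _|⟨y,t⟩; · simp at hlen
    rcases t with _|⟨z,t⟩; · simp at hlen
    rcases t with _|⟨w4,t⟩; swap; · exfalso; simp at hlen
    have hxy : x = y := (hiso 0 1 (by norm_num) (by norm_num)).2.mpr (by norm_num)
    have hxz : x < z := (hiso 0 2 (by norm_num) (by norm_num)).1.mpr (by norm_num)
    subst hxy
    exact ⟨x, z, hxz, hsub⟩
  · rintro ⟨a, b, hab, hsub⟩
    refine ⟨[a,a,b], hsub, rfl, ?_⟩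
    intro r s hr hs
    simp only [List.length_cons, List.length_nil] at hr hs
    interval_cases r <;> interval_cases s <;>
      simp only [show ([a,a,b].getD 0 0 : ℕ) = a from rfl,
        show ([a,a,b].getD 1 0 : ℕ) = a from rfl,
        show ([a,a,b].getD 2 0 : ℕ) = b from rfl,
        show (([1,1,2] : List ℕ).getD 0 0) = 1 from rfl,
        show (([1,1,2] : List ℕ).getD 1 0) = 1 from rfl,
        show (([1,1,2] : List ℕ).getD 2 0) = 2 from rfl] <;>
      refine ⟨?_, ?_⟩ <;> first | trivial | omega

lemma StW_iff {n : ℕ} {w : List ℕ} :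
    (IsNonnesting n w ∧ Avoids w [1,1,2]) ↔ StW n n w := by
  constructor
  · rintro ⟨⟨hperm, h1221, h2112⟩, h112⟩
    refine ⟨?_, ?_, ?_, ?_, ?_⟩
    · intro i; rw [hperm i]; split_ifs <;> omega
    · exact fun a b hab hs => h112 (contains_112_iff.mpr ⟨a,b,hab,hs⟩)
    · exact fun a b hab hs => h1221 (contains_1221_iff.mpr ⟨a,b,hab,hs⟩)
    · exact fun a b hab hs => h2112 (contains_2112_iff.mpr ⟨a,b,hab,hs⟩)
    · intro x y hx hy hs
      have hxw : x ∈ w := hs.subset (by simp)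
      have h1 := List.count_pos_iff.mpr hxw
      have h2 := hperm x
      split_ifs at h2 <;> omega
  · rintro ⟨hc, h112, h1221, h2112, hpend⟩
    refine ⟨⟨?_, ?_, ?_⟩, ?_⟩
    · intro i; rw [hc i]; split_ifs <;> omega
    · intro hcon; obtain ⟨a,b,hab,hs⟩ := contains_1221_iff.mp hcon; exact h1221 a b hab hs
    · intro hcon; obtain ⟨a,b,hab,hs⟩ := contains_2112_iff.mp hcon; exact h2112 a b hab hs
    · intro hcon; obtain ⟨a,b,hab,hs⟩ := contains_112_iff.mp hcon; exact h112 a b hab hs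

theorem nonnesting_avoid_112 (n : ℕ) (hn : 1 ≤ n) :
    {w : List ℕ | IsNonnesting n w ∧ Avoids w [1,1,2]}.ncard = catalan n := by
  classical
  let Φ : {p : DyckWord // p.semilength = n} → List ℕ := fun p => tw n n p.1.toList
  have hgood : ∀ p : {p : DyckWord // p.semilength = n}, goodL n n p.1.toList := by
    intro p
    refine ⟨p.2, ?_, fun i => ?_⟩
    · rw [← p.1.count_U_eq_count_D]; exact p.2
    · have := p.1.count_D_le_count_U i
      omega
  have hrange : {w : List ℕ | IsNonnesting n w ∧ Avoids w [1,1,2]} = Set.range Φ := by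
    ext w
    constructor
    · intro hw
      have hst : StW n n w := StW_iff.mp hw
      obtain ⟨l, hgl, hweq⟩ := L2 w n n le_rfl hst
      refine ⟨⟨⟨l, ?_, ?_⟩, ?_⟩, hweq.symm⟩
      · exact hgl.1.trans hgl.2.1.symm
      · intro i; have := hgl.2.2 i; omega
      · exact hgl.1
    · rintro ⟨p, rfl⟩
      exact StW_iff.mpr (L1 p.1.toList n n le_rfl (hgood p))
  have hinj : Function.Injective Φ := by
    intro p q hpq
    have hl := tw_inj p.1.toList q.1.toList n n (hgood p) (hgood q) hpq
    exact Subtype.ext (DyckWord.ext hl)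
  rw [hrange, ← Nat.card_coe_set_eq, Nat.card_range_of_injective hinj,
    Nat.card_eq_fintype_card, DyckWord.card_dyckWord_semilength_eq_catalan]
end

section
/- For all n ≥ 1, the number of nonnesting permutations of the multiset {1,1,2,2,…,n,n} that avoid the pattern 121 equals n!. -/
/-- double each letter -/
def dbl (l : List ℕ) : List ℕ := l.flatMap (fun a => [a, a])

@[simp] lemma dbl_nil : dbl [] = [] := rfl
@[simp] lemma dbl_cons (a : ℕ) (l : List ℕ) : dbl (a :: l) = a :: a :: dbl l := rfl

@[simp] lemma mem_dbl {a : ℕ} {l : List ℕ} : a ∈ dbl l ↔ a ∈ l := by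
  induction l with
  | nil => simp
  | cons b l ih => simp [ih]

lemma count_dbl (i : ℕ) (l : List ℕ) : (dbl l).count i = 2 * l.count i := by
  induction l with
  | nil => simp
  | cons b l ih =>
    simp only [dbl_cons, List.count_cons, ih]
    by_cases h : b = i <;> simp [h] <;> ring

lemma dbl_injective : Function.Injective dbl := by
  intro l1
  induction l1 with
  | nil => intro l2 h; cases l2 <;> simp_all
  | cons a l1 ih =>
    intro l2 h
    cases l2 with
    | nil => simp_all
    | cons b l2 =>
      simp only [dbl_cons, List.cons.injEq] at h
      obtain ⟨h1, _, h3⟩ := h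
      exact by rw [h1, ih h3]

lemma noABA {l : List ℕ} (hnd : l.Nodup) {a b : ℕ} (hab : a ≠ b)
    (h : [a, b, a].Sublist (dbl l)) : False := by
  induction l with
  | nil => simp at h
  | cons c l ih =>
    simp only [dbl_cons] at h
    rcases List.sublist_cons_iff.mp h with h | ⟨r, hr, hrs⟩
    · rcases List.sublist_cons_iff.mp h with h | ⟨r, hr, hrs⟩
      · exact ih (List.Nodup.of_cons hnd) h
      · -- [a,b,a] = c :: r, r <+ dbl l
        cases hr
        have : a ∈ dbl l := List.singleton_sublist.mp
          ((List.sublist_cons_self b [a]).trans hrs)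
        exact (List.nodup_cons.mp hnd).1 (mem_dbl.mp this)
    · -- [a,b,a] = c :: r, r <+ c :: dbl l
      cases hr
      rcases List.sublist_cons_iff.mp hrs with h' | ⟨r', hr', hrs'⟩
      · have : a ∈ dbl l := List.singleton_sublist.mp
          ((List.sublist_cons_self b [a]).trans h')
        exact (List.nodup_cons.mp hnd).1 (mem_dbl.mp this)
      · -- [b,a] = c :: r', but a = c so b = c = a
        simp only [List.cons.injEq] at hr'
        exact hab (hr'.1.symm)

lemma pair_sublist {a b : ℕ} {l : List ℕ} (hab : a ≠ b) (ha : a ∈ l) (hb : b ∈ l) :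
    [a, b].Sublist l ∨ [b, a].Sublist l := by
  induction l with
  | nil => simp at ha
  | cons c l ih =>
    by_cases hac : a = c
    · subst hac
      have hb' : b ∈ l := List.mem_of_ne_of_mem (Ne.symm hab) hb
      exact Or.inl (List.cons_sublist_cons.mpr (List.singleton_sublist.mpr hb'))
    · by_cases hbc : b = c
      · subst hbc
        have ha' : a ∈ l := List.mem_of_ne_of_mem hac ha
        exact Or.inr (List.cons_sublist_cons.mpr (List.singleton_sublist.mpr ha'))
      · have ha' : a ∈ l := List.mem_of_ne_of_mem hac ha
        have hb' : b ∈ l := List.mem_of_ne_of_mem hbc hb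
        rcases ih ha' hb' with h | h
        · exact Or.inl (h.cons c)
        · exact Or.inr (h.cons c)

lemma oi121 {a b : ℕ} (h : a < b) : OrderIsoWord [a, b, a] [1, 2, 1] := by
  refine ⟨rfl, fun r s hr hs => ?_⟩
  simp only [List.length_cons, List.length_nil] at hr hs
  interval_cases r <;> interval_cases s <;> simp [List.getD] <;> omega

lemma oi2112 {a b : ℕ} (h : b < a) : OrderIsoWord [a, b, b, a] [2, 1, 1, 2] := by
  refine ⟨rfl, fun r s hr hs => ?_⟩
  simp only [List.length_cons, List.length_nil] at hr hs
  interval_cases r <;> interval_cases s <;> simp [List.getD] <;> omega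

/-- extracting the shape from an order-iso to a pattern of length 3 -/
lemma oi_shape3 {t : List ℕ} (h : OrderIsoWord t [1,2,1]) :
    ∃ a b, a < b ∧ t = [a, b, a] := by
  obtain ⟨hlen, hrel⟩ := h
  simp only [List.length_cons, List.length_nil] at hlen
  obtain ⟨a, b, c, rfl⟩ := List.length_eq_three.mp hlen
  have h02 := (hrel 0 2 (by norm_num) (by norm_num)).2
  have h01 := (hrel 0 1 (by norm_num) (by norm_num)).1
  simp [List.getD] at h02 h01
  exact ⟨a, b, h01, by rw [h02]⟩

lemma oi_shape4 {t : List ℕ} {p0 p1 : ℕ} (hp : p0 ≠ p1)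
    (h : OrderIsoWord t [p0,p1,p1,p0]) :
    ∃ a b, a ≠ b ∧ (p0 < p1 → a < b) ∧ (p1 < p0 → b < a) ∧ t = [a, b, b, a] := by
  obtain ⟨hlen, hrel⟩ := h
  simp only [List.length_cons, List.length_nil] at hlen
  match t, hlen with
  | [a, b, c, d], _ =>
    have h03 := (hrel 0 3 (by norm_num) (by norm_num)).2
    have h12 := (hrel 1 2 (by norm_num) (by norm_num)).2
    have h01lt := (hrel 0 1 (by norm_num) (by norm_num)).1
    have h10lt := (hrel 1 0 (by norm_num) (by norm_num)).1
    have h01eq := (hrel 0 1 (by norm_num) (by norm_num)).2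
    simp [List.getD] at h03 h12 h01lt h10lt h01eq
    refine ⟨a, b, ?_, ?_, ?_, ?_⟩
    · intro hab; exact hp (h01eq.mp hab)
    · intro hlt; exact h01lt.mpr hlt
    · intro hlt; exact h10lt.mpr hlt
    · rw [h03, h12]

/-- Structural lemma: forward direction. -/
lemma struct : ∀ N (w : List ℕ), w.length ≤ N →
    (∀ x ∈ w, w.count x = 2) →
    (∀ a b : ℕ, a < b → ¬ [a, b, a].Sublist w) →
    (∀ a b : ℕ, b < a → ¬ [a, b, b, a].Sublist w) →
    ∃ l : List ℕ, l.Nodup ∧ w = dbl l := by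
  intro N
  induction N with
  | zero =>
    intro w hw _ _ _
    have : w = [] := List.length_eq_zero_iff.mp (Nat.le_zero.mp hw)
    exact ⟨[], List.nodup_nil, by simp [this]⟩
  | succ N ih =>
    intro w hw hcount h121 h2112
    match w with
    | [] => exact ⟨[], List.nodup_nil, by simp⟩
    | x :: w' =>
      have hcx : (x :: w').count x = 2 := hcount x List.mem_cons_self
      have hxw' : x ∈ w' := by
        have : w'.count x = 1 := by
          simp [List.count_cons] at hcx; omega
        exact List.count_pos_iff.mp (by omega)
      match w' with
      | [] => simp at hxw'
      | y :: rest =>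
        by_cases hxy : x = y
        · -- w = x :: x :: rest
          subst hxy
          have hxrest : x ∉ rest := by
            have : rest.count x = 0 := by
              have := hcount x List.mem_cons_self
              simp [List.count_cons] at this; omega
            exact List.count_eq_zero.mp this
          have hrest : ∃ l : List ℕ, l.Nodup ∧ rest = dbl l := by
            apply ih rest (by simp at hw; omega)
            · intro z hz
              have hzx : z ≠ x := fun h => hxrest (h ▸ hz)
              have := hcount z (by simp [hz])
              simp [List.count_cons, hzx, Ne.symm hzx] at this
              omega
            · intro a b hab hs
              exact h121 a b hab (hs.trans ((List.sublist_cons_self x rest).trans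
                (List.sublist_cons_self x _)))
            · intro a b hab hs
              exact h2112 a b hab (hs.trans ((List.sublist_cons_self x rest).trans
                (List.sublist_cons_self x _)))
          obtain ⟨l, hl, hrl⟩ := hrest
          refine ⟨x :: l, ?_, by simp [hrl]⟩
          exact List.nodup_cons.mpr ⟨fun h => hxrest (hrl ▸ mem_dbl.mpr h), hl⟩
        · -- bad case: derive contradiction
          exfalso
          -- x ∈ rest (since x ∈ w' = y :: rest and x ≠ y)
          have hxr : x ∈ rest := by
            rcases List.mem_cons.mp hxw' with h | h
            · exact absurd h hxy
            · exact h
          have hyr : y ∈ rest := by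
            have := hcount y (by simp)
            simp [List.count_cons, Ne.symm hxy, hxy] at this
            exact List.count_pos_iff.mp (by omega)
          rcases Nat.lt_or_ge x y with hlt | hge
          · -- x < y : [x, y, x] sublist
            exact h121 x y hlt (List.cons_sublist_cons.mpr
              (List.cons_sublist_cons.mpr (List.singleton_sublist.mpr hxr)))
          · have hlt : y < x := by omega
            rcases pair_sublist hxy hxr hyr with h | h
            · -- [x,y] <+ rest : subsequence y (head of w'), x, y : [y,x,y], y < x, pattern 121
              exact h121 y x hlt ((List.cons_sublist_cons.mpr h).cons x)
            · -- [y,x] <+ rest : [x, y, y, x], y < x, pattern 2112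
              exact h2112 x y hlt (List.cons_sublist_cons.mpr
                (List.cons_sublist_cons.mpr h))

theorem nonnesting_avoid_121 (n : ℕ) (hn : 1 ≤ n) :
    {w : List ℕ | IsNonnesting n w ∧ Avoids w [1,2,1]}.ncard = Nat.factorial n := by
  set R : List ℕ := List.range' 1 n with hR
  have hRnd : R.Nodup := List.nodup_range'
  have hset : {w : List ℕ | IsNonnesting n w ∧ Avoids w [1,2,1]} =
      dbl '' {l : List ℕ | l.Perm R} := by
    ext w
    simp only [Set.mem_setOf_eq, Set.mem_image]
    constructor
    · rintro ⟨⟨hmp, h1221, h2112⟩, h121⟩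
      have h121' : ∀ a b : ℕ, a < b → ¬ [a, b, a].Sublist w := by
        intro a b hab hs
        exact h121 ⟨[a,b,a], hs, oi121 hab⟩
      have h2112' : ∀ a b : ℕ, b < a → ¬ [a, b, b, a].Sublist w := by
        intro a b hab hs
        exact h2112 ⟨[a,b,b,a], hs, oi2112 hab⟩
      have hcount : ∀ x ∈ w, w.count x = 2 := by
        intro x hx
        have := hmp x
        by_cases h : 1 ≤ x ∧ x ≤ n
        · simpa [h] using this
        · exfalso
          have : w.count x = 0 := by simpa [h] using this
          exact (List.count_eq_zero.mp this) hx
      obtain ⟨l, hlnd, hwl⟩ := struct w.length w le_rfl hcount h121' h2112'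
      refine ⟨l, ?_, hwl.symm⟩
      rw [List.perm_ext_iff_of_nodup hlnd hRnd]
      intro a
      rw [hR, List.mem_range'_1]
      constructor
      · intro ha
        have : w.count a ≠ 0 := by
          rw [hwl, count_dbl]
          have : l.count a ≠ 0 := fun h => (List.count_eq_zero.mp h) ha
          omega
        have := hmp a
        by_cases h : 1 ≤ a ∧ a ≤ n
        · omega
        · simp [h] at this; omega
      · intro ha
        have h' : 1 ≤ a ∧ a ≤ n := ⟨ha.1, by omega⟩
        have : w.count a = 2 := by simpa [h'] using hmp a
        rw [hwl, count_dbl] at this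
        have : l.count a ≠ 0 := by omega
        exact List.count_pos_iff.mp (by omega)
    · rintro ⟨l, hl, rfl⟩
      have hlnd : l.Nodup := hl.nodup_iff.mpr hRnd
      have hnoaba : ∀ a b : ℕ, a ≠ b → ¬ [a, b, a].Sublist (dbl l) :=
        fun a b hab hs => noABA hlnd hab hs
      refine ⟨⟨?_, ?_, ?_⟩, ?_⟩
      · intro i
        rw [count_dbl]
        have : l.count i = R.count i := hl.count_eq i
        rw [this]
        by_cases h : 1 ≤ i ∧ i ≤ n
        · have : i ∈ R := by rw [hR, List.mem_range'_1]; omega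
          rw [List.count_eq_one_of_mem hRnd this]
          simp [h]
        · have : i ∉ R := by rw [hR, List.mem_range'_1]; omega
          rw [List.count_eq_zero_of_not_mem this]
          simp [h]
      · rintro ⟨t, hts, hoi⟩
        obtain ⟨a, b, hab, hlt, _, rfl⟩ := oi_shape4 (by norm_num) hoi
        have : [a, b, a].Sublist (dbl l) := by
          refine List.Sublist.trans ?_ hts
          exact List.cons_sublist_cons.mpr (List.cons_sublist_cons.mpr
            ((List.Sublist.refl [a]).cons b))
        exact hnoaba a b hab this
      · rintro ⟨t, hts, hoi⟩
        obtain ⟨a, b, hab, _, hlt, rfl⟩ := oi_shape4 (by norm_num) hoi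
        have : [a, b, a].Sublist (dbl l) := by
          refine List.Sublist.trans ?_ hts
          exact List.cons_sublist_cons.mpr (List.cons_sublist_cons.mpr
            ((List.Sublist.refl [a]).cons b))
        exact hnoaba a b hab this
      · rintro ⟨t, hts, hoi⟩
        obtain ⟨a, b, hab, rfl⟩ := oi_shape3 hoi
        exact hnoaba a b (Nat.ne_of_lt hab) hts
  rw [hset, Set.ncard_image_of_injective _ dbl_injective]
  have hpeq : {l : List ℕ | l.Perm R} = ↑R.permutations.toFinset := by
    ext l
    simp [List.mem_permutations]
  rw [hpeq, Set.ncard_coe_finset,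
    List.toFinset_card_of_nodup (List.nodup_permutations R hRnd),
    List.length_permutations]
  simp [hR]
end

section
/- For all n ≥ 2, the number of nonnesting permutations of the multiset {1,1,2,2,…,n,n} that avoid both patterns 123 and 231 equals (n² + 5n − 6)/2. -/
open List

def Good (w : List ℕ) : Prop :=
  (∀ x y : ℕ, x < y → ¬ [x,y,y,x] <+ w) ∧ (∀ x y : ℕ, x < y → ¬ [y,x,x,y] <+ w) ∧
  (∀ x y z : ℕ, x < y → y < z → ¬ [x,y,z] <+ w) ∧ (∀ x y z : ℕ, x < y → y < z → ¬ [y,z,x] <+ w)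

lemma count_one_decomp {w : List ℕ} {v : ℕ} (h : w.count v = 1) :
    ∃ B C, w = B ++ v :: C ∧ v ∉ B ∧ v ∉ C := by
  induction w with
  | nil => simp at h
  | cons a t ih =>
    by_cases hav : v = a
    · subst hav
      simp [List.count_cons] at h
      exact ⟨[], t, rfl, by simp, by rw [← List.count_eq_zero]; omega⟩
    · simp [List.count_cons, hav, Ne.symm hav] at h
      obtain ⟨B, C, rfl, hB, hC⟩ := ih h
      exact ⟨a :: B, C, rfl, by simp [hB, Ne.symm hav, hav], hC⟩

lemma count_two_decomp {w : List ℕ} {v : ℕ} (h : w.count v = 2) :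
    ∃ A B C, w = A ++ v :: (B ++ v :: C) ∧ v ∉ A ∧ v ∉ B ∧ v ∉ C := by
  induction w with
  | nil => simp at h
  | cons a t ih =>
    by_cases hav : v = a
    · subst hav
      simp [List.count_cons] at h
      obtain ⟨B, C, rfl, hB, hC⟩ := count_one_decomp (by omega : t.count v = 1)
      exact ⟨[], B, C, rfl, by simp, hB, hC⟩
    · simp [List.count_cons, hav, Ne.symm hav] at h
      obtain ⟨A, B, C, rfl, hA, hB, hC⟩ := ih h
      exact ⟨a :: A, B, C, rfl, by simp [hA, hav, Ne.symm hav], hB, hC⟩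

lemma good_sublist {w w' : List ℕ} (hs : w' <+ w) (hg : Good w) : Good w' :=
  ⟨fun x y h hsub => hg.1 x y h (hsub.trans hs),
   fun x y h hsub => hg.2.1 x y h (hsub.trans hs),
   fun x y z h h' hsub => hg.2.2.1 x y z h h' (hsub.trans hs),
   fun x y z h h' hsub => hg.2.2.2 x y z h h' (hsub.trans hs)⟩

instance : IsAntisymm ℕ (· ≥ ·) := ⟨fun _ _ h1 h2 => le_antisymm h2 h1⟩

lemma sorted_unique {l1 l2 : List ℕ} (h1 : l1.Pairwise (· ≥ ·)) (h2 : l2.Pairwise (· ≥ ·))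
    (hc : ∀ i, l1.count i = l2.count i) : l1 = l2 :=
  List.Perm.eq_of_pairwise (fun _ _ _ _ h1 h2 => le_antisymm h2 h1) h1 h2 (List.perm_iff_count.mpr hc)

theorem contains123_iff {w : List ℕ} :
    Contains w [1,2,3] ↔ ∃ x y z, x < y ∧ y < z ∧ [x,y,z] <+ w := by
  constructor
  · rintro ⟨t, hsub, hlen, hiso⟩
    match t, hlen with
    | [x,y,z], _ =>
      refine ⟨x, y, z, ?_, ?_, hsub⟩
      · exact (hiso 0 1 (by norm_num) (by norm_num)).1.mpr (by norm_num)
      · exact (hiso 1 2 (by norm_num) (by norm_num)).1.mpr (by norm_num)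
  · rintro ⟨x, y, z, hxy, hyz, hsub⟩
    refine ⟨[x,y,z], hsub, rfl, ?_⟩
    intro r s hr hs
    simp only [List.length_cons, List.length_nil] at hr hs
    interval_cases r <;> interval_cases s <;> simp [List.getD] <;> omega

theorem contains231_iff {w : List ℕ} :
    Contains w [2,3,1] ↔ ∃ x y z, x < y ∧ y < z ∧ [y,z,x] <+ w := by
  constructor
  · rintro ⟨t, hsub, hlen, hiso⟩
    match t, hlen with
    | [p,q,r], _ =>
      refine ⟨r, p, q, ?_, ?_, hsub⟩
      · exact (hiso 2 0 (by norm_num) (by norm_num)).1.mpr (by norm_num)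
      · exact (hiso 0 1 (by norm_num) (by norm_num)).1.mpr (by norm_num)
  · rintro ⟨x, y, z, hxy, hyz, hsub⟩
    refine ⟨[y,z,x], hsub, rfl, ?_⟩
    intro r s hr hs
    simp only [List.length_cons, List.length_nil] at hr hs
    interval_cases r <;> interval_cases s <;> simp [List.getD] <;> omega

theorem contains1221_iff {w : List ℕ} :
    Contains w [1,2,2,1] ↔ ∃ x y, x < y ∧ [x,y,y,x] <+ w := by
  constructor
  · rintro ⟨t, hsub, hlen, hiso⟩
    match t, hlen with
    | [a,b,c,d], _ =>
      have hbc : b = c := (hiso 1 2 (by norm_num) (by norm_num)).2.mpr (by norm_num)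
      have had : a = d := (hiso 0 3 (by norm_num) (by norm_num)).2.mpr (by norm_num)
      have hab : a < b := (hiso 0 1 (by norm_num) (by norm_num)).1.mpr (by norm_num)
      subst hbc had
      exact ⟨a, b, hab, hsub⟩
  · rintro ⟨x, y, hxy, hsub⟩
    refine ⟨[x,y,y,x], hsub, rfl, ?_⟩
    intro r s hr hs
    simp only [List.length_cons, List.length_nil] at hr hs
    interval_cases r <;> interval_cases s <;> simp [List.getD] <;> omega

theorem contains2112_iff {w : List ℕ} :
    Contains w [2,1,1,2] ↔ ∃ x y, x < y ∧ [y,x,x,y] <+ w := by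
  constructor
  · rintro ⟨t, hsub, hlen, hiso⟩
    match t, hlen with
    | [a,b,c,d], _ =>
      have hbc : b = c := (hiso 1 2 (by norm_num) (by norm_num)).2.mpr (by norm_num)
      have had : a = d := (hiso 0 3 (by norm_num) (by norm_num)).2.mpr (by norm_num)
      have hab : b < a := (hiso 1 0 (by norm_num) (by norm_num)).1.mpr (by norm_num)
      subst hbc had
      exact ⟨b, a, hab, hsub⟩
  · rintro ⟨x, y, hxy, hsub⟩
    refine ⟨[y,x,x,y], hsub, rfl, ?_⟩
    intro r s hr hs
    simp only [List.length_cons, List.length_nil] at hr hs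
    interval_cases r <;> interval_cases s <;> simp [List.getD] <;> omega

def Dec : ℕ → ℕ → List ℕ
  | 0, _ => []
  | (a+1), b => if b ≤ a+1 then (a+1) :: (a+1) :: Dec a b else []

lemma Dec_eq_nil {a b : ℕ} (h : a < b) : Dec a b = [] := by
  cases a with
  | zero => rfl
  | succ a => simp [Dec, Nat.not_le.mpr h]

lemma Dec_cons {a b : ℕ} (h1 : b ≤ a) (h2 : 1 ≤ a) : Dec a b = a :: a :: Dec (a-1) b := by
  cases a with
  | zero => omega
  | succ a => simp [Dec, h1]

lemma mem_Dec {a b i : ℕ} : i ∈ Dec a b ↔ (b ≤ i ∧ 1 ≤ i ∧ i ≤ a) := by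
  induction a with
  | zero => simp [Dec]; omega
  | succ a ih =>
    by_cases h : b ≤ a + 1
    · simp [Dec, h, ih]; omega
    · simp [Dec, h]; omega

lemma sorted_Dec {a b : ℕ} : (Dec a b).Pairwise (· ≥ ·) := by
  induction a with
  | zero => simp [Dec]
  | succ a ih =>
    by_cases h : b ≤ a + 1
    · simp only [Dec, if_pos h, List.pairwise_cons]
      refine ⟨?_, ?_, ih⟩ <;> intro c hc <;> simp [mem_Dec] at hc <;> omega
    · simp [Dec, h]

lemma count_Dec {a b i : ℕ} (hb : 1 ≤ b) :
    (Dec a b).count i = if b ≤ i ∧ i ≤ a then 2 else 0 := by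
  induction a with
  | zero => rw [Dec]; simp only [List.count_nil]; split_ifs <;> omega
  | succ a ih =>
    by_cases h : b ≤ a + 1
    · simp only [Dec, if_pos h, List.count_cons, ih]
      by_cases h1 : b ≤ i <;> by_cases h2 : i ≤ a <;> by_cases h3 : i = a + 1 <;>
        simp [h1, h2, h3] <;> first | omega | (split_ifs <;> omega)
    · rw [Dec_eq_nil (by omega)]; simp only [List.count_nil]; split_ifs <;> omega

lemma split2 {a b : ℕ} {l1 l2 : List ℕ} (h : [a,b] = l1 ++ l2) :
    l1 = [] ∧ l2 = [a,b] ∨ l1 = [a] ∧ l2 = [b] ∨ l1 = [a,b] ∧ l2 = [] := by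
  rcases l1 with _|⟨x1,_|⟨x2,t⟩⟩ <;> simp_all

lemma split3 {a b c : ℕ} {l1 l2 : List ℕ} (h : [a,b,c] = l1 ++ l2) :
    l1 = [] ∧ l2 = [a,b,c] ∨ l1 = [a] ∧ l2 = [b,c] ∨ l1 = [a,b] ∧ l2 = [c] ∨
    l1 = [a,b,c] ∧ l2 = [] := by
  rcases l1 with _|⟨x1,_|⟨x2,_|⟨x3,t⟩⟩⟩ <;> simp_all

lemma split4 {a b c d : ℕ} {l1 l2 : List ℕ} (h : [a,b,c,d] = l1 ++ l2) :
    l1 = [] ∧ l2 = [a,b,c,d] ∨ l1 = [a] ∧ l2 = [b,c,d] ∨ l1 = [a,b] ∧ l2 = [c,d] ∨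
    l1 = [a,b,c] ∧ l2 = [d] ∨ l1 = [a,b,c,d] ∧ l2 = [] := by
  rcases l1 with _|⟨x1,_|⟨x2,_|⟨x3,_|⟨x4,t⟩⟩⟩⟩ <;> simp_all

lemma no_ascent_of_sorted {w : List ℕ} (hw : w.Pairwise (· ≥ ·)) {x y : ℕ} (h : [x,y] <+ w) :
    y ≤ x :=
  List.pairwise_iff_forall_sublist.mp hw h

lemma sub2_of_sub3l {x y z : ℕ} {w : List ℕ} (h : [x,y,z] <+ w) : [x,y] <+ w :=
  (by simp : [x,y] <+ [x,y,z]).trans h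

lemma sub2_of_sub3r {x y z : ℕ} {w : List ℕ} (h : [x,y,z] <+ w) : [y,z] <+ w :=
  (by simp : [y,z] <+ [x,y,z]).trans h

lemma good_of_sorted {w : List ℕ} (hw : w.Pairwise (· ≥ ·)) : Good w := by
  refine ⟨fun x y hxy h => ?_, fun x y hxy h => ?_, fun x y z hxy hyz h => ?_,
    fun x y z hxy hyz h => ?_⟩
  · have := no_ascent_of_sorted hw ((by simp : [x,y] <+ [x,y,y,x]).trans h); omega
  · have := no_ascent_of_sorted hw ((by simp : [x,y] <+ [y,x,x,y]).trans h); omega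
  · have := no_ascent_of_sorted hw (sub2_of_sub3l h); omega
  · have := no_ascent_of_sorted hw (sub2_of_sub3l h); omega

lemma good_two_blocks {A B : List ℕ} (hA : A.Pairwise (· ≥ ·)) (hB : B.Pairwise (· ≥ ·))
    (hAB : ∀ x ∈ A, ∀ y ∈ B, x < y) : Good (A ++ B) := by
  refine ⟨fun x y hxy h => ?_, fun x y hxy h => ?_, fun x y z hxy hyz h => ?_,
    fun x y z hxy hyz h => ?_⟩
  · rw [List.sublist_append_iff] at h
    obtain ⟨l1, l2, he, h1, h2⟩ := h
    rcases split4 he with ⟨rfl,rfl⟩|⟨rfl,rfl⟩|⟨rfl,rfl⟩|⟨rfl,rfl⟩|⟨rfl,rfl⟩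
    · exact absurd (no_ascent_of_sorted hB (sub2_of_sub3l ((by simp : [x,y,y] <+ [x,y,y,x]).trans h2))) (by omega)
    · exact absurd (hAB x (by simpa using h1) x (h2.subset (by simp))) (by omega)
    · exact absurd (no_ascent_of_sorted hA h1) (by omega)
    · exact absurd (no_ascent_of_sorted hA (sub2_of_sub3l h1)) (by omega)
    · exact absurd (no_ascent_of_sorted hA ((by simp : [x,y] <+ [x,y,y,x]).trans h1)) (by omega)
  · rw [List.sublist_append_iff] at h
    obtain ⟨l1, l2, he, h1, h2⟩ := h
    rcases split4 he with ⟨rfl,rfl⟩|⟨rfl,rfl⟩|⟨rfl,rfl⟩|⟨rfl,rfl⟩|⟨rfl,rfl⟩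
    · exact absurd (no_ascent_of_sorted hB ((by simp : [x,y] <+ [y,x,x,y]).trans h2)) (by omega)
    · exact absurd (no_ascent_of_sorted hB (sub2_of_sub3r h2)) (by omega)
    · exact absurd (no_ascent_of_sorted hB h2) (by omega)
    · exact absurd (hAB y (h1.subset (by simp)) y (by simpa using h2)) (by omega)
    · exact absurd (no_ascent_of_sorted hA ((by simp : [x,y] <+ [y,x,x,y]).trans h1)) (by omega)
  · rw [List.sublist_append_iff] at h
    obtain ⟨l1, l2, he, h1, h2⟩ := h
    rcases split3 he with ⟨rfl,rfl⟩|⟨rfl,rfl⟩|⟨rfl,rfl⟩|⟨rfl,rfl⟩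
    · exact absurd (no_ascent_of_sorted hB (sub2_of_sub3l h2)) (by omega)
    · exact absurd (no_ascent_of_sorted hB h2) (by omega)
    · exact absurd (no_ascent_of_sorted hA h1) (by omega)
    · exact absurd (no_ascent_of_sorted hA (sub2_of_sub3l h1)) (by omega)
  · rw [List.sublist_append_iff] at h
    obtain ⟨l1, l2, he, h1, h2⟩ := h
    rcases split3 he with ⟨rfl,rfl⟩|⟨rfl,rfl⟩|⟨rfl,rfl⟩|⟨rfl,rfl⟩
    · exact absurd (no_ascent_of_sorted hB (sub2_of_sub3l h2)) (by omega)
    · exact absurd (hAB y (by simpa using h1) x (h2.subset (by simp))) (by omega)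
    · exact absurd (no_ascent_of_sorted hA h1) (by omega)
    · exact absurd (no_ascent_of_sorted hA (sub2_of_sub3l h1)) (by omega)
lemma good_U (n : ℕ) (hn : 2 ≤ n) (D : List ℕ) (hD : D.Pairwise (· ≥ ·))
    (hmem : ∀ v ∈ D, 2 ≤ v ∧ v < n) : Good ([1,n,1,n] ++ D) := by
  refine ⟨fun x y hxy h => ?_, fun x y hxy h => ?_, fun x y z hxy hyz h => ?_,
    fun x y z hxy hyz h => ?_⟩ <;>
  [rw [List.sublist_append_iff] at h; rw [List.sublist_append_iff] at h;
   rw [List.sublist_append_iff] at h; rw [List.sublist_append_iff] at h] <;>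
  [(obtain ⟨l1, l2, he, h1, h2⟩ := h;
    have hsort := List.Pairwise.sublist h2 hD;
    have hmm := fun v hv => hmem v (h2.subset hv);
    rw [← List.mem_sublists] at h1; clear h2 hD hmem;
    rcases split4 he with ⟨rfl,rfl⟩|⟨rfl,rfl⟩|⟨rfl,rfl⟩|⟨rfl,rfl⟩|⟨rfl,rfl⟩);
   (obtain ⟨l1, l2, he, h1, h2⟩ := h;
    have hsort := List.Pairwise.sublist h2 hD;
    have hmm := fun v hv => hmem v (h2.subset hv);
    rw [← List.mem_sublists] at h1; clear h2 hD hmem;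
    rcases split4 he with ⟨rfl,rfl⟩|⟨rfl,rfl⟩|⟨rfl,rfl⟩|⟨rfl,rfl⟩|⟨rfl,rfl⟩);
   (obtain ⟨l1, l2, he, h1, h2⟩ := h;
    have hsort := List.Pairwise.sublist h2 hD;
    have hmm := fun v hv => hmem v (h2.subset hv);
    rw [← List.mem_sublists] at h1; clear h2 hD hmem;
    rcases split3 he with ⟨rfl,rfl⟩|⟨rfl,rfl⟩|⟨rfl,rfl⟩|⟨rfl,rfl⟩);
   (obtain ⟨l1, l2, he, h1, h2⟩ := h;
    have hsort := List.Pairwise.sublist h2 hD;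
    have hmm := fun v hv => hmem v (h2.subset hv);
    rw [← List.mem_sublists] at h1; clear h2 hD hmem;
    rcases split3 he with ⟨rfl,rfl⟩|⟨rfl,rfl⟩|⟨rfl,rfl⟩|⟨rfl,rfl⟩)] <;>
  · simp [List.sublists, List.pairwise_cons] at h1 hsort hmm ⊢
    omega
set_option maxHeartbeats 1000000 in
lemma good_V (n : ℕ) (hn : 2 ≤ n) (D : List ℕ) (hD : D.Pairwise (· ≥ ·))
    (hmem : ∀ v ∈ D, 2 ≤ v ∧ v < n) : Good ([n,1,n,1] ++ D) := by
  refine ⟨fun x y hxy h => ?_, fun x y hxy h => ?_, fun x y z hxy hyz h => ?_,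
    fun x y z hxy hyz h => ?_⟩ <;>
  · rw [List.sublist_append_iff] at h
    obtain ⟨l1, l2, he, h1, h2⟩ := h
    have hsort := List.Pairwise.sublist h2 hD
    have hmm := fun v hv => hmem v (h2.subset hv)
    rw [← List.mem_sublists] at h1
    clear h2 hD hmem
    first
      | (rcases split4 he with ⟨rfl,rfl⟩|⟨rfl,rfl⟩|⟨rfl,rfl⟩|⟨rfl,rfl⟩|⟨rfl,rfl⟩)
      | (rcases split3 he with ⟨rfl,rfl⟩|⟨rfl,rfl⟩|⟨rfl,rfl⟩|⟨rfl,rfl⟩)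
    all_goals simp [List.sublists, List.pairwise_cons] at h1 hsort hmm ⊢
    all_goals omega

set_option maxHeartbeats 2000000 in
lemma good_W4 (n : ℕ) (hn : 3 ≤ n) (D : List ℕ) (hD : D.Pairwise (· ≥ ·))
    (hmem : ∀ v ∈ D, 2 ≤ v ∧ v < n - 1) : Good ([n,1,n,n-1,1,n-1] ++ D) := by
  refine ⟨fun x y hxy h => ?_, fun x y hxy h => ?_, fun x y z hxy hyz h => ?_,
    fun x y z hxy hyz h => ?_⟩ <;>
  · rw [List.sublist_append_iff] at h
    obtain ⟨l1, l2, he, h1, h2⟩ := h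
    have hsort := List.Pairwise.sublist h2 hD
    have hmm := fun v hv => hmem v (h2.subset hv)
    rw [← List.mem_sublists] at h1
    clear h2 hD hmem
    first
      | (rcases split4 he with ⟨rfl,rfl⟩|⟨rfl,rfl⟩|⟨rfl,rfl⟩|⟨rfl,rfl⟩|⟨rfl,rfl⟩)
      | (rcases split3 he with ⟨rfl,rfl⟩|⟨rfl,rfl⟩|⟨rfl,rfl⟩|⟨rfl,rfl⟩)
    all_goals simp [List.sublists, List.pairwise_cons] at h1 hsort hmm ⊢
    all_goals omega
theorem classify {n : ℕ} (hn : 2 ≤ n) {w : List ℕ} (hperm : IsMultisetPerm n w) (hg : Good w) :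
    (∃ a, 1 ≤ a ∧ a ≤ n - 1 ∧ w = Dec a 1 ++ n :: n :: Dec (n-1) (a+1))
    ∨ w = 1 :: n :: 1 :: n :: Dec (n-1) 2
    ∨ w = n :: 1 :: n :: 1 :: Dec (n-1) 2
    ∨ (3 ≤ n ∧ w = n :: 1 :: n :: (n-1) :: 1 :: (n-1) :: Dec (n-2) 2)
    ∨ (∃ w', w = n :: n :: w') := by
  obtain ⟨g1, g2, g3, g4⟩ := hg
  have hmemw : ∀ i, i ∈ w ↔ 1 ≤ i ∧ i ≤ n := by
    intro i
    rw [← List.count_pos_iff, hperm i]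
    split_ifs with h <;> omega
  obtain ⟨A, B, C, hw, hnA, hnB, hnC⟩ :=
    count_two_decomp (show w.count n = 2 by rw [hperm]; rw [if_pos ⟨by omega, le_refl n⟩])
  have hAmem : ∀ x ∈ A, 1 ≤ x ∧ x < n := by
    intro x hx
    have h1 := (hmemw x).mp (by rw [hw]; simp [hx])
    have h2 : x ≠ n := fun h => hnA (h ▸ hx)
    omega
  have hBmem : ∀ x ∈ B, 1 ≤ x ∧ x < n := by
    intro x hx
    have h1 := (hmemw x).mp (by rw [hw]; simp [hx])
    have h2 : x ≠ n := fun h => hnB (h ▸ hx)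
    omega
  have hCmem : ∀ x ∈ C, 1 ≤ x ∧ x < n := by
    intro x hx
    have h1 := (hmemw x).mp (by rw [hw]; simp [hx])
    have h2 : x ≠ n := fun h => hnC (h ▸ hx)
    omega
  have hc3 : ∀ i, i ≠ n → A.count i + B.count i + C.count i
      = if 1 ≤ i ∧ i ≤ n then 2 else 0 := by
    intro i hi
    have h0 := hperm i
    rw [hw] at h0
    simp [List.count_append, List.count_cons, hi, Ne.symm hi] at h0
    rw [← h0]; ring
  have subw : ∀ {l : List ℕ}, l <+ A ++ n :: (B ++ n :: C) → l <+ w := by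
    rw [hw]; exact fun h => h
  have F1 : ∀ v, v ∈ A → v ∈ C → False := by
    intro v hvA hvC
    have hv := hAmem v hvA
    exact g1 v n (by omega)
      (subw ((List.singleton_sublist.mpr hvA).append
        (((List.nil_sublist B).append ((List.singleton_sublist.mpr hvC).cons₂ n)).cons₂ n)))
  have F2 : ∀ v, B.count v ≤ 1 := by
    intro v; by_contra h
    have h2 : [v,v] <+ B := by
      simpa using List.replicate_sublist_iff.mpr (show 2 ≤ B.count v by omega)
    have hv := hBmem v (h2.subset (by simp))
    exact g2 v n (by omega)
      (subw ((List.nil_sublist A).append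
        (((h2.append (List.singleton_sublist.mpr (by simp : n ∈ n :: C))).cons₂ n))))
  have F3 : A.Pairwise (· ≥ ·) := by
    refine List.pairwise_iff_forall_sublist.mpr ?_
    intro x y hs
    by_contra hlt
    push_neg at hlt
    have hy := hAmem y (hs.subset (by simp))
    exact g3 x y n hlt (by omega)
      (subw (hs.append (List.singleton_sublist.mpr (by simp))))
  have F4 : ∀ x ∈ A, ∀ z, (z ∈ B ∨ z ∈ C) → x ≤ z := by
    intro x hx z hz
    by_contra h
    push_neg at h
    have hxm := hAmem x hx
    have hzsub : [n, z] <+ n :: (B ++ n :: C) := by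
      rcases hz with hz | hz
      · exact (List.singleton_sublist.mpr (List.mem_append_left _ hz)).cons₂ n
      · exact (List.singleton_sublist.mpr (List.mem_append_right _ (List.mem_cons_of_mem n hz))).cons₂ n
    exact g4 z x n h hxm.2 (subw ((List.singleton_sublist.mpr hx).append hzsub))
  rcases A with _ | ⟨a, A'⟩
  · -- A = []
    rcases B with _ | ⟨b, B'⟩
    · exact Or.inr (Or.inr (Or.inr (Or.inr ⟨C, by simpa using hw⟩)))
    · have h1B : (1:ℕ) ∈ b :: B' := by
        by_contra h1B
        have hcB : (b :: B').count 1 = 0 := List.count_eq_zero.mpr h1B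
        have h1C : (1:ℕ) ∈ C := by
          have h := hc3 1 (by omega)
          rw [if_pos ⟨le_refl 1, by omega⟩] at h
          simp only [List.count_nil] at h
          exact List.count_pos_iff.mp (by omega)
        have hb := hBmem b (by simp)
        have hb1 : b ≠ 1 := fun h => h1B (by simp [h])
        exact g4 1 b n (by omega) hb.2
          (subw ((((List.singleton_sublist.mpr (by simp : b ∈ b :: B')).append
            ((List.singleton_sublist.mpr h1C).cons₂ n)).cons n)))
      have hcB1 : (b :: B').count 1 = 1 := by
        have h1 := F2 1
        have h2 := List.count_pos_iff.mpr h1B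
        omega
      obtain ⟨B1, B2, hBe, h1B1, h1B2⟩ := count_one_decomp hcB1
      have h1C : (1:ℕ) ∈ C := by
        have h := hc3 1 (by omega)
        rw [if_pos ⟨le_refl 1, by omega⟩] at h
        simp only [List.count_nil] at h
        exact List.count_pos_iff.mp (by omega)
      have hB1nil : B1 = [] := by
        rcases B1 with _ | ⟨z, B1'⟩
        · rfl
        exfalso
        have hzB : z ∈ b :: B' := by rw [hBe]; simp
        have hz := hBmem z hzB
        have hz1 : z ≠ 1 := fun h => h1B1 (by simp [← h])
        exact g4 1 z n (by omega) hz.2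
          (subw ((((List.singleton_sublist.mpr hzB).append
            ((List.singleton_sublist.mpr h1C).cons₂ n)).cons n)))
      subst hB1nil
      simp only [List.nil_append] at hBe
      have hB2nil : B2 = [] := by
        rcases B2 with _ | ⟨z, B2'⟩
        · rfl
        exfalso
        have hzB : z ∈ b :: B' := by rw [hBe]; simp
        have hz := hBmem z hzB
        have hz1 : z ≠ 1 := fun h => h1B2 (by simp [← h])
        have hsub : [1, z, n] <+ (b :: B') ++ n :: C := by
          rw [hBe]
          exact ((((List.singleton_sublist.mpr (by simp : z ∈ z :: B2')).append
            (List.singleton_sublist.mpr (by simp : n ∈ n :: C)))).cons₂ 1)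
        exact g3 1 z n (by omega) hz.2 (subw ((hsub.cons n)))
      subst hB2nil
      -- B = [1]
      have hcC1 : C.count 1 = 1 := by
        have h := hc3 1 (by omega)
        rw [if_pos ⟨le_refl 1, by omega⟩, hBe] at h
        simp at h
        omega
      obtain ⟨C1, C2, hCe, h1C1, h1C2⟩ := count_one_decomp hcC1
      have hsub12C : C1 ++ C2 <+ C := by
        rw [hCe]; exact (Sublist.refl C1).append ((Sublist.refl C2).cons 1)
      have hsort : (C1 ++ C2).Pairwise (· ≥ ·) := by
        refine List.pairwise_iff_forall_sublist.mpr ?_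
        intro x y hs
        by_contra hxy
        push_neg at hxy
        have hx12 : x ∈ C1 ++ C2 := hs.subset (by simp)
        have hx1 : x ≠ 1 := by
          rcases List.mem_append.mp hx12 with h | h
          · exact fun he => h1C1 (he ▸ h)
          · exact fun he => h1C2 (he ▸ h)
        have hxC : x ∈ C := hsub12C.subset hx12
        have hxm := hCmem x hxC
        have hxyC : [x, y] <+ C := hs.trans hsub12C
        have hsubw : [1, x, y] <+ (b :: B') ++ n :: C := by
          rw [hBe]
          exact (hxyC.cons n).cons₂ 1
        exact g3 1 x y (by omega) hxy (subw (hsubw.cons n))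
      have hC12 : C1 ++ C2 = Dec (n-1) 2 := by
        refine sorted_unique hsort sorted_Dec ?_
        intro i
        rw [count_Dec (by omega)]
        by_cases hi1 : i = 1
        · subst hi1
          rw [List.count_append, List.count_eq_zero.mpr h1C1, List.count_eq_zero.mpr h1C2]
          rw [if_neg (by omega)]
        · by_cases hin : i = n
          · have hnC12 : n ∉ C1 ++ C2 := fun h => hnC (hsub12C.subset h)
            rw [hin, List.count_eq_zero.mpr hnC12, if_neg (by omega)]
          · have h := hc3 i hin
            rw [hBe] at h
            have hCi : C.count i = C1.count i + C2.count i := by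
              rw [hCe]; simp [List.count_append, List.count_cons, hi1, Ne.symm hi1]
            have hAi : ([] : List ℕ).count i = 0 := rfl
            have hBi : [1].count i = 0 := by simp [List.count_cons, hi1, Ne.symm hi1]
            rw [List.count_append]
            rw [hAi, hBi] at h
            rw [hCi] at h
            split_ifs at h ⊢ <;> omega
      have hC1le : ∀ v, C1.count v ≤ 1 := by
        intro v; by_contra h
        push_neg at h
        have h2 : [v, v] <+ C1 := by
          simpa using List.replicate_sublist_iff.mpr (show 2 ≤ C1.count v by omega)
        have hvC1 : v ∈ C1 := h2.subset (by simp)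
        have hvC : v ∈ C := hsub12C.subset (List.mem_append_left _ hvC1)
        have hvm := hCmem v hvC
        have hv1 : v ≠ 1 := fun h' => h1C1 (h' ▸ hvC1)
        have hsubC : [v, v, 1] <+ C := by
          rw [hCe]
          exact h2.append ((List.nil_sublist C2).cons₂ 1)
        have hsubw : [1, v, v, 1] <+ (b :: B') ++ n :: C := by
          rw [hBe]
          exact (hsubC.cons n).cons₂ 1
        exact g1 1 v (by omega) (subw (hsubw.cons n))
      rcases C1 with _ | ⟨c, C1'⟩
      · refine Or.inr (Or.inr (Or.inl ?_))
        simp only [List.nil_append] at hC12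
        rw [hw, hCe, hC12, hBe]
        simp
      · have hne : Dec (n-1) 2 ≠ [] := by
          rw [← hC12]; simp
        have hn3 : 3 ≤ n := by
          by_contra h
          exact hne (Dec_eq_nil (by omega))
        have hdec : Dec (n-1) 2 = (n-1) :: (n-1) :: Dec (n-2) 2 := by
          rw [Dec_cons (by omega) (by omega), show n-1-1 = n-2 from by omega]
        rw [hdec] at hC12
        simp only [List.cons_append, List.cons.injEq] at hC12
        obtain ⟨hc, hC12'⟩ := hC12
        rcases C1' with _ | ⟨c', C1''⟩
        · simp only [List.nil_append] at hC12'
          refine Or.inr (Or.inr (Or.inr (Or.inl ⟨hn3, ?_⟩)))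
          rw [hw, hCe, hBe, hC12', hc]
          simp
        · exfalso
          simp only [List.cons_append, List.cons.injEq] at hC12'
          obtain ⟨hc', _⟩ := hC12'
          have : 2 ≤ (c :: c' :: C1'').count (n-1) := by
            subst hc hc'
            simp [List.count_cons]
          have := hC1le (n-1)
          omega
  · -- A = a :: A'
    have haA : a ∈ a :: A' := by simp
    have ham := hAmem a haA
    have hamax : ∀ x ∈ a :: A', x ≤ a := by
      intro x hx
      rcases List.mem_cons.mp hx with rfl | hx'
      · exact le_refl x
      · exact (List.pairwise_cons.mp F3).1 x hx'
    have hnotC : ∀ v ∈ C, a < v := by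
      intro v hv
      rcases lt_or_ge a v with h | h
      · exact h
      · exfalso
        have h4 := F4 a haA v (Or.inr hv)
        have hva : v = a := by omega
        exact F1 a haA (hva ▸ hv)
    have hBge : ∀ z ∈ B, a ≤ z := fun z hz => F4 a haA z (Or.inl hz)
    by_cases h1B : (1:ℕ) ∈ B
    · -- U case
      have ha1 : a = 1 := by
        have h1 := hBge 1 h1B
        have h2 := ham.1
        omega
      subst ha1
      have hA1 : ∀ x ∈ 1 :: A', x = 1 := fun x hx =>
        le_antisymm (hamax x hx) (hAmem x hx).1
      have hA'nil : A' = [] := by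
        rcases A' with _ | ⟨x, A''⟩
        · rfl
        exfalso
        have hx1 : x = 1 := hA1 x (by simp)
        have hcA : 2 ≤ (1 :: x :: A'').count 1 := by
          subst hx1; simp [List.count_cons]
        have hB1 : 1 ≤ B.count 1 := List.count_pos_iff.mpr h1B
        have h := hc3 1 (by omega)
        rw [if_pos ⟨le_refl 1, by omega⟩] at h
        omega
      subst hA'nil
      have hBall1 : ∀ z ∈ B, z = 1 := by
        intro z hz
        by_contra hz1
        have hzm := hBmem z hz
        exact g3 1 z n (by omega) hzm.2
          (subw ((List.singleton_sublist.mpr (by simp : (1:ℕ) ∈ [1])).append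
            (((List.singleton_sublist.mpr hz).append
              (List.singleton_sublist.mpr (by simp : n ∈ n :: C))).cons n)))
      have hBeq : B = [1] := by
        rcases B with _ | ⟨b, B'⟩
        · exact absurd h1B (by simp)
        have hb := hBall1 b (by simp)
        rcases B' with _ | ⟨b', B''⟩
        · rw [hb]
        exfalso
        have hb' := hBall1 b' (by simp)
        have := F2 1
        rw [hb] at this
        simp [List.count_cons, hb'] at this
      have hsC : C.Pairwise (· ≥ ·) := by
        refine List.pairwise_iff_forall_sublist.mpr ?_
        intro x y hs
        by_contra hxy
        push_neg at hxy
        have hx : x ∈ C := hs.subset (by simp)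
        have hx2 := hnotC x hx
        exact g3 1 x y hx2 hxy
          (subw ((List.singleton_sublist.mpr (by simp : (1:ℕ) ∈ [1])).append
            (((List.nil_sublist B).append (hs.cons n)).cons n)))
      have hCeq : C = Dec (n-1) 2 := by
        refine sorted_unique hsC sorted_Dec ?_
        intro i
        rw [count_Dec (by omega)]
        by_cases hi1 : i = 1
        · subst hi1
          have h := hc3 1 (by omega)
          rw [if_pos ⟨le_refl 1, by omega⟩, hBeq] at h
          simp at h
          rw [if_neg (by omega)]
          omega
        · by_cases hin : i = n
          · rw [hin, List.count_eq_zero.mpr hnC, if_neg (by omega)]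
          · have h := hc3 i hin
            rw [hBeq] at h
            have h1 : ([1] : List ℕ).count i = 0 := by simp [List.count_cons, hi1, Ne.symm hi1]
            rw [h1] at h
            split_ifs at h ⊢ <;> omega
      refine Or.inr (Or.inl ?_)
      rw [hw, hBeq, hCeq]
      simp
    · -- R case
      have h1nC : (1:ℕ) ∉ C := by
        intro h
        have := hnotC 1 h
        have := ham.1
        omega
      have hc1A : (a :: A').count 1 = 2 := by
        have h := hc3 1 (by omega)
        rw [if_pos ⟨le_refl 1, by omega⟩] at h
        rw [List.count_eq_zero.mpr h1B, List.count_eq_zero.mpr h1nC] at h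
        omega
      have h1A : (1:ℕ) ∈ a :: A' := List.count_pos_iff.mp (by omega)
      have hBnil : B = [] := by
        rcases B with _ | ⟨z, B'⟩
        · rfl
        exfalso
        have hz := hBmem z (by simp)
        have hz1 : z ≠ 1 := fun h => h1B (by simp [h])
        exact g3 1 z n (by omega) hz.2
          (subw ((List.singleton_sublist.mpr h1A).append
            (((List.singleton_sublist.mpr (by simp : z ∈ z :: B')).append
              (List.singleton_sublist.mpr (by simp : n ∈ n :: C))).cons n)))
      subst hBnil
      have hsC : C.Pairwise (· ≥ ·) := by
        refine List.pairwise_iff_forall_sublist.mpr ?_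
        intro x y hs
        by_contra hxy
        push_neg at hxy
        have hx : x ∈ C := hs.subset (by simp)
        have hx2 := hnotC x hx
        have hx1 : 1 < x := by
          have := ham.1
          omega
        exact g3 1 x y hx1 hxy
          (subw ((List.singleton_sublist.mpr h1A).append
            (((List.nil_sublist []).append (hs.cons n)).cons n)))
      have hAeq : a :: A' = Dec a 1 := by
        refine sorted_unique F3 sorted_Dec ?_
        intro i
        rw [count_Dec (le_refl 1)]
        by_cases hin : i = n
        · rw [hin, List.count_eq_zero.mpr hnA, if_neg (by omega)]
        · have h := hc3 i hin
          simp only [List.count_nil] at h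
          by_cases hia : 1 ≤ i ∧ i ≤ a
          · have hiC : i ∉ C := fun hc => by
              have := hnotC i hc
              omega
            rw [List.count_eq_zero.mpr hiC] at h
            rw [if_pos hia]
            have : 1 ≤ i ∧ i ≤ n := ⟨hia.1, by omega⟩
            rw [if_pos this] at h
            omega
          · have hiA : i ∉ a :: A' := fun hA => by
              have h1 := hAmem i hA
              have h2 := hamax i hA
              omega
            rw [List.count_eq_zero.mpr hiA, if_neg hia]
      have hCeq : C = Dec (n-1) (a+1) := by
        refine sorted_unique hsC sorted_Dec ?_
        intro i
        rw [count_Dec (by omega)]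
        by_cases hin : i = n
        · rw [hin, List.count_eq_zero.mpr hnC, if_neg (by omega)]
        · have h := hc3 i hin
          simp only [List.count_nil] at h
          by_cases hia : a + 1 ≤ i ∧ i ≤ n - 1
          · have hiA : i ∉ a :: A' := fun hA => by
              have := hamax i hA
              omega
            rw [List.count_eq_zero.mpr hiA] at h
            rw [if_pos hia]
            have : 1 ≤ i ∧ i ≤ n := ⟨by omega, by omega⟩
            rw [if_pos this] at h
            omega
          · have hiC : i ∉ C := fun hc => by
              have h1 := hnotC i hc
              have h2 := hCmem i hc
              omega
            rw [List.count_eq_zero.mpr hiC, if_neg hia]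
      refine Or.inl ⟨a, ham.1, by omega, ?_⟩
      rw [hw, hAeq, hCeq]
      simp
def Rw (n a : ℕ) : List ℕ := Dec a 1 ++ n :: n :: Dec (n-1) (a+1)
def Uw (n : ℕ) : List ℕ := 1 :: n :: 1 :: n :: Dec (n-1) 2
def Vw (n : ℕ) : List ℕ := n :: 1 :: n :: 1 :: Dec (n-1) 2
def Ww (n : ℕ) : List ℕ := n :: 1 :: n :: (n-1) :: 1 :: (n-1) :: Dec (n-2) 2

lemma Rw_cons {n a : ℕ} (ha : 1 ≤ a) :
    Rw n a = a :: a :: (Dec (a-1) 1 ++ n :: n :: Dec (n-1) (a+1)) := by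
  rw [Rw, Dec_cons (le_refl _ |>.trans ha) ha]
  simp

lemma msp_mem {n : ℕ} {w : List ℕ} (h : IsMultisetPerm n w) :
    ∀ v ∈ w, 1 ≤ v ∧ v ≤ n := by
  intro v hv
  have := h v
  have h2 : 0 < w.count v := List.count_pos_iff.mpr hv
  split_ifs at this <;> omega

lemma good_Rw {n a : ℕ} (ha : 1 ≤ a) (han : a ≤ n - 1) (hn : 2 ≤ n) : Good (Rw n a) := by
  refine good_two_blocks sorted_Dec ?_ ?_
  · rw [List.pairwise_cons, List.pairwise_cons]
    refine ⟨?_, ?_, sorted_Dec⟩ <;> intro b hb <;> simp [mem_Dec] at hb <;> omega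
  · intro x hx y hy
    rw [mem_Dec] at hx
    simp only [List.mem_cons] at hy
    rcases hy with rfl | rfl | hy
    · omega
    · omega
    · rw [mem_Dec] at hy; omega

lemma msp_Rw {n a : ℕ} (ha : 1 ≤ a) (han : a ≤ n - 1) (hn : 2 ≤ n) :
    IsMultisetPerm n (Rw n a) := by
  intro i
  have h1 := count_Dec (a := a) (b := 1) (i := i) (le_refl 1)
  have h2 := count_Dec (a := n-1) (b := a+1) (i := i) (by omega)
  simp [Rw, List.count_append, List.count_cons, h1, h2]
  split_ifs <;> omega

lemma msp_Uw {n : ℕ} (hn : 2 ≤ n) : IsMultisetPerm n (Uw n) := by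
  intro i
  have h2 := count_Dec (a := n-1) (b := 2) (i := i) (by omega)
  simp [Uw, List.count_cons, h2]
  split_ifs <;> omega

lemma msp_Vw {n : ℕ} (hn : 2 ≤ n) : IsMultisetPerm n (Vw n) := by
  intro i
  have h2 := count_Dec (a := n-1) (b := 2) (i := i) (by omega)
  simp [Vw, List.count_cons, h2]
  split_ifs <;> omega

lemma msp_Ww {n : ℕ} (hn : 3 ≤ n) : IsMultisetPerm n (Ww n) := by
  intro i
  have h2 := count_Dec (a := n-2) (b := 2) (i := i) (by omega)
  simp [Ww, List.count_cons, h2]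
  split_ifs <;> omega

lemma good_Uw {n : ℕ} (hn : 2 ≤ n) : Good (Uw n) := by
  have := good_U n hn (Dec (n-1) 2) sorted_Dec (by intro v hv; rw [mem_Dec] at hv; omega)
  simpa [Uw] using this

lemma good_Vw {n : ℕ} (hn : 2 ≤ n) : Good (Vw n) := by
  have := good_V n hn (Dec (n-1) 2) sorted_Dec (by intro v hv; rw [mem_Dec] at hv; omega)
  simpa [Vw] using this

lemma good_Ww {n : ℕ} (hn : 3 ≤ n) : Good (Ww n) := by
  have := good_W4 n hn (Dec (n-2) 2) sorted_Dec (by intro v hv; rw [mem_Dec] at hv; omega)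
  simpa [Ww] using this

lemma good_cons2 {n : ℕ} {w' : List ℕ} (hmem : ∀ v ∈ w', v < n) (hg : Good w') :
    Good (n :: n :: w') := by
  obtain ⟨k1, k2, k3, k4⟩ := hg
  have hrw : (n :: n :: w') = [n,n] ++ w' := rfl
  rw [hrw]
  refine ⟨fun x y hxy h => ?_, fun x y hxy h => ?_, fun x y z hxy hyz h => ?_,
    fun x y z hxy hyz h => ?_⟩ <;>
  · rw [List.sublist_append_iff] at h
    obtain ⟨l1, l2, he, h1, h2⟩ := h
    have hmm := fun v hv => hmem v (h2.subset hv)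
    rw [← List.mem_sublists] at h1
    first
      | (rcases split4 he with ⟨rfl,rfl⟩|⟨rfl,rfl⟩|⟨rfl,rfl⟩|⟨rfl,rfl⟩|⟨rfl,rfl⟩)
      | (rcases split3 he with ⟨rfl,rfl⟩|⟨rfl,rfl⟩|⟨rfl,rfl⟩|⟨rfl,rfl⟩)
    all_goals first
      | exact k1 x y hxy h2
      | exact k2 x y hxy h2
      | exact k3 x y z hxy hyz h2
      | exact k4 x y z hxy hyz h2
      | (simp [List.sublists] at h1 hmm; try omega)
      | (simp [List.sublists] at h1; try omega)

lemma msp_cons2 {n : ℕ} (hn : 2 ≤ n) {w' : List ℕ} (h : IsMultisetPerm (n-1) w') :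
    IsMultisetPerm n (n :: n :: w') := by
  intro i
  have hi := h i
  rw [List.count_cons, List.count_cons, hi]
  by_cases h1 : i = n <;> simp [h1] <;> split_ifs <;> omega

lemma msp_uncons2 {n : ℕ} (hn : 2 ≤ n) {w' : List ℕ} (h : IsMultisetPerm n (n :: n :: w')) :
    IsMultisetPerm (n-1) w' := by
  intro i
  have hi := h i
  rw [List.count_cons, List.count_cons] at hi
  by_cases h1 : i = n <;> simp [h1] at hi ⊢ <;> split_ifs at hi ⊢ <;> omega

lemma msp_one {w : List ℕ} (h : IsMultisetPerm 1 w) : w = [1, 1] := by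
  have hm : ∀ v ∈ w, v = 1 := by
    intro v hv
    have := msp_mem h v hv
    omega
  have hr : w = List.replicate w.length 1 := List.eq_replicate_of_mem hm
  have hc := h 1
  rw [if_pos ⟨le_refl 1, le_refl 1⟩] at hc
  rw [hr] at hc ⊢
  simp at hc
  rw [hc]
  rfl

lemma valid_iff {n : ℕ} {w : List ℕ} :
    (IsNonnesting n w ∧ Avoids w [1,2,3] ∧ Avoids w [2,3,1]) ↔
      (IsMultisetPerm n w ∧ Good w) := by
  constructor
  · rintro ⟨⟨hm, h1, h2⟩, h3, h4⟩
    refine ⟨hm, fun x y hxy hs => h1 (contains1221_iff.mpr ⟨x, y, hxy, hs⟩),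
      fun x y hxy hs => h2 (contains2112_iff.mpr ⟨x, y, hxy, hs⟩),
      fun x y z hxy hyz hs => h3 (contains123_iff.mpr ⟨x, y, z, hxy, hyz, hs⟩),
      fun x y z hxy hyz hs => h4 (contains231_iff.mpr ⟨x, y, z, hxy, hyz, hs⟩)⟩
  · rintro ⟨hm, k1, k2, k3, k4⟩
    refine ⟨⟨hm, fun hc => ?_, fun hc => ?_⟩, fun hc => ?_, fun hc => ?_⟩
    · obtain ⟨x, y, h, hs⟩ := contains1221_iff.mp hc; exact k1 x y h hs
    · obtain ⟨x, y, h, hs⟩ := contains2112_iff.mp hc; exact k2 x y h hs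
    · obtain ⟨x, y, z, h, h', hs⟩ := contains123_iff.mp hc; exact k3 x y z h h' hs
    · obtain ⟨x, y, z, h, h', hs⟩ := contains231_iff.mp hc; exact k4 x y z h h' hs

def Sset (n : ℕ) : Set (List ℕ) := {w | IsMultisetPerm n w ∧ Good w}

lemma step_eq {n : ℕ} (hn : 3 ≤ n) :
    Sset n = (fun w => n :: n :: w) '' Sset (n-1)
      ∪ ((fun a => Rw n a) '' (Set.Icc 1 (n-1)) ∪ {Uw n, Vw n, Ww n}) := by
  ext w
  constructor
  · rintro ⟨hm, hg⟩
    rcases classify (by omega) hm hg with ⟨a, ha1, ha2, rfl⟩ | rfl | rfl | ⟨_, rfl⟩ | ⟨w', rfl⟩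
    · exact Or.inr (Or.inl ⟨a, ⟨ha1, ha2⟩, rfl⟩)
    · exact Or.inr (Or.inr (by simp [Uw]))
    · exact Or.inr (Or.inr (by simp [Vw]))
    · exact Or.inr (Or.inr (by simp [Ww]))
    · refine Or.inl ⟨w', ⟨msp_uncons2 (by omega) hm, ?_⟩, rfl⟩
      exact good_sublist ((List.Sublist.refl w').cons n |>.cons n) hg
  · rintro (⟨w', ⟨hm', hg'⟩, rfl⟩ | ⟨a, ⟨ha1, ha2⟩, rfl⟩ | hw)
    · refine ⟨msp_cons2 (by omega) hm', good_cons2 ?_ hg'⟩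
      intro v hv
      have := msp_mem hm' v hv
      omega
    · exact ⟨msp_Rw ha1 ha2 (by omega), good_Rw ha1 ha2 (by omega)⟩
    · simp only [Set.mem_insert_iff, Set.mem_singleton_iff] at hw
      rcases hw with rfl | rfl | rfl
      · exact ⟨msp_Uw (by omega), good_Uw (by omega)⟩
      · exact ⟨msp_Vw (by omega), good_Vw (by omega)⟩
      · exact ⟨msp_Ww hn, good_Ww hn⟩

lemma base_eq : Sset 2 = {[1,1,2,2], [1,2,1,2], [2,1,2,1], [2,2,1,1]} := by
  ext w
  constructor
  · rintro ⟨hm, hg⟩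
    rcases classify (le_refl 2) hm hg with ⟨a, ha1, ha2, rfl⟩ | rfl | rfl | ⟨h3, _⟩ | ⟨w', rfl⟩
    · have ha : a = 1 := by omega
      subst ha
      show _ ∈ ({_, _, _, _} : Set (List ℕ))
      simp only [Set.mem_insert_iff, Set.mem_singleton_iff]
      decide
    · simp only [Set.mem_insert_iff, Set.mem_singleton_iff]; decide
    · simp only [Set.mem_insert_iff, Set.mem_singleton_iff]; decide
    · omega
    · have hw' : w' = [1, 1] := msp_one (by
        have := msp_uncons2 (le_refl 2) hm
        simpa using this)
      subst hw'
      simp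
  · intro hw
    simp only [Set.mem_insert_iff, Set.mem_singleton_iff] at hw
    rcases hw with rfl | rfl | rfl | rfl
    · have h : [1,1,2,2] = Rw 2 1 := by decide
      rw [h]
      exact ⟨msp_Rw (le_refl 1) (by norm_num) (le_refl 2), good_Rw (le_refl 1) (by norm_num) (le_refl 2)⟩
    · have h : [1,2,1,2] = Uw 2 := by decide
      rw [h]
      exact ⟨msp_Uw (le_refl 2), good_Uw (le_refl 2)⟩
    · have h : [2,1,2,1] = Vw 2 := by decide
      rw [h]
      exact ⟨msp_Vw (le_refl 2), good_Vw (le_refl 2)⟩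
    · refine ⟨?_, good_cons2 (n := 2) (w' := [1,1]) (by decide) (good_of_sorted (by decide))⟩
      exact msp_cons2 (le_refl 2) (by intro i; simp [List.count_cons]; split_ifs <;> omega)
lemma Sset_finite_card : ∀ n, 2 ≤ n → (Sset n).Finite ∧ (Sset n).ncard = (n^2 + 5*n - 6)/2 := by
  intro n hn
  induction n, hn using Nat.le_induction with
  | base =>
    rw [base_eq]
    refine ⟨Set.toFinite _, ?_⟩
    rw [Set.ncard_insert_of_notMem (by simp) (Set.toFinite _),
      Set.ncard_insert_of_notMem (by simp) (Set.toFinite _),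
      Set.ncard_insert_of_notMem (by simp) (Set.toFinite _), Set.ncard_singleton]
    norm_num
  | succ m hm ih =>
    have h3 : 3 ≤ m + 1 := by omega
    have hstep := step_eq (n := m+1) h3
    simp only [Nat.add_sub_cancel] at hstep
    have hInj : Function.Injective (fun w : List ℕ => (m+1) :: (m+1) :: w) := by
      intro a b h
      simpa using h
    have hImgFin : ((fun w : List ℕ => (m+1) :: (m+1) :: w) '' Sset m).Finite := ih.1.image _
    have hE1Fin : ((fun a => Rw (m+1) a) '' Set.Icc 1 m).Finite :=
      (Set.finite_Icc _ _).image _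
    have hE2Fin : ({Uw (m+1), Vw (m+1), Ww (m+1)} : Set (List ℕ)).Finite := Set.toFinite _
    have hRinj : Set.InjOn (fun a => Rw (m+1) a) (Set.Icc 1 m) := by
      intro a ha a' ha' he
      simp only [Set.mem_Icc] at ha ha'
      simp only at he
      rw [Rw_cons ha.1, Rw_cons ha'.1] at he
      exact (List.cons.injEq _ _ _ _).mp he |>.1
    have hUV : Uw (m+1) ≠ Vw (m+1) := by
      intro h
      rw [Uw, Vw] at h
      have := (List.cons.injEq _ _ _ _).mp h |>.1
      omega
    have hUW : Uw (m+1) ≠ Ww (m+1) := by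
      intro h
      rw [Uw, Ww] at h
      have := (List.cons.injEq _ _ _ _).mp h |>.1
      omega
    have hVW : Vw (m+1) ≠ Ww (m+1) := by
      intro h
      rw [Vw, Ww] at h
      have h2 := (List.cons.injEq _ _ _ _).mp h |>.2
      have h3 := (List.cons.injEq _ _ _ _).mp h2 |>.2
      have h4 := (List.cons.injEq _ _ _ _).mp h3 |>.2
      have h5 := (List.cons.injEq _ _ _ _).mp h4 |>.1
      simp only [Nat.add_sub_cancel] at h5
      omega
    have hRU : ∀ a ∈ Set.Icc 1 m, Rw (m+1) a ≠ Uw (m+1) := by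
      intro a ha h
      simp only [Set.mem_Icc] at ha
      rw [Rw_cons ha.1, Uw] at h
      have h1 := (List.cons.injEq _ _ _ _).mp h |>.1
      have h2 := (List.cons.injEq _ _ _ _).mp ((List.cons.injEq _ _ _ _).mp h |>.2) |>.1
      omega
    have hRV : ∀ a ∈ Set.Icc 1 m, Rw (m+1) a ≠ Vw (m+1) := by
      intro a ha h
      simp only [Set.mem_Icc] at ha
      rw [Rw_cons ha.1, Vw] at h
      have h1 := (List.cons.injEq _ _ _ _).mp h |>.1
      omega
    have hRW : ∀ a ∈ Set.Icc 1 m, Rw (m+1) a ≠ Ww (m+1) := by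
      intro a ha h
      simp only [Set.mem_Icc] at ha
      rw [Rw_cons ha.1, Ww] at h
      have h1 := (List.cons.injEq _ _ _ _).mp h |>.1
      omega
    have hdisj2 : Disjoint ((fun a => Rw (m+1) a) '' Set.Icc 1 m)
        ({Uw (m+1), Vw (m+1), Ww (m+1)} : Set (List ℕ)) := by
      rw [Set.disjoint_left]
      rintro w ⟨a, ha, rfl⟩ hw
      simp only [Set.mem_insert_iff, Set.mem_singleton_iff] at hw
      rcases hw with h | h | h
      · exact hRU a ha h
      · exact hRV a ha h
      · exact hRW a ha h
    have hdisj : Disjoint ((fun w : List ℕ => (m+1) :: (m+1) :: w) '' Sset m)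
        (((fun a => Rw (m+1) a) '' Set.Icc 1 m) ∪ ({Uw (m+1), Vw (m+1), Ww (m+1)} : Set (List ℕ))) := by
      rw [Set.disjoint_left]
      rintro w ⟨w', _, rfl⟩ hw
      rcases hw with ⟨a, ha, he⟩ | hw
      · simp only [Set.mem_Icc] at ha
        simp only at he
        rw [Rw_cons ha.1] at he
        have := (List.cons.injEq _ _ _ _).mp he |>.1
        omega
      · simp only [Set.mem_insert_iff, Set.mem_singleton_iff] at hw
        rcases hw with h | h | h
        · rw [Uw] at h
          have := (List.cons.injEq _ _ _ _).mp h.symm |>.1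
          omega
        · rw [Vw] at h
          have := (List.cons.injEq _ _ _ _).mp ((List.cons.injEq _ _ _ _).mp h.symm |>.2) |>.1
          omega
        · rw [Ww] at h
          have := (List.cons.injEq _ _ _ _).mp ((List.cons.injEq _ _ _ _).mp h.symm |>.2) |>.1
          omega
    constructor
    · rw [hstep]
      exact hImgFin.union (hE1Fin.union hE2Fin)
    · rw [hstep, Set.ncard_union_eq hdisj hImgFin (hE1Fin.union hE2Fin),
        Set.ncard_union_eq hdisj2 hE1Fin hE2Fin,
        Set.ncard_image_of_injective _ hInj,
        Set.ncard_image_of_injOn hRinj]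
      have hIcc : (Set.Icc 1 m).ncard = m := by
        rw [← Finset.coe_Icc, Set.ncard_coe_finset, Nat.card_Icc]
        omega
      have hE2card : ({Uw (m+1), Vw (m+1), Ww (m+1)} : Set (List ℕ)).ncard = 3 := by
        rw [Set.ncard_insert_of_notMem (by simp [hUV, hUW]) (Set.toFinite _),
          Set.ncard_insert_of_notMem (by simp [hVW]) (Set.toFinite _), Set.ncard_singleton]
      rw [hIcc, hE2card, ih.2]
      obtain ⟨k, hk⟩ : Even (m * (m+1)) := Nat.even_mul_succ_self m
      have hq1 : m^2 + 5*m = m*(m+1) + 4*m := by ring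
      have hq2 : (m+1)^2 + 5*(m+1) = m*(m+1) + 6*(m+1) := by ring
      omega

theorem nonnesting_avoid_123_231 (n : ℕ) (hn : 2 ≤ n) :
    {w : List ℕ | IsNonnesting n w ∧ Avoids w [1,2,3] ∧ Avoids w [2,3,1]}.ncard =
      (n ^ 2 + 5 * n - 6) / 2 := by
  have hset : {w : List ℕ | IsNonnesting n w ∧ Avoids w [1,2,3] ∧ Avoids w [2,3,1]} = Sset n := by
    ext w
    exact valid_iff
  rw [hset]
  exact (Sset_finite_card n hn).2
end
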